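/- Let H be an infinite-dimensional complex Hilbert space, A a bounded normal operator on H, and G a finite set of vectors in H such that the family (A^n g), indexed by (g,n) ∈ G × ℕ, satisfies a lower frame bound: there is α > 0 with α‖f‖² ≤ Σ_{g∈G} Σ_{n≥0} |⟨f, A^n g⟩|² for all f ∈ H. Then for every r with 0 < r < 1, the spectrum of A is not contained in the closed disk { z ∈ ℂ : |z| ≤ r }; equivalently, since A is normal, ‖A‖ ≥ 1. -/

import Mathlib

open ContinuousLinearMap
open scoped InnerProductSpace ENNReal
open scoped NNReal

/-- If `H` is infinite dimensional, `A` is a bounded normal operator and `G` is a finite set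
of vectors such that `{A^n g : g ∈ G, n ∈ ℕ}` satisfies a lower frame bound, then the
spectrum of `A` is not contained in any closed disk of radius `r < 1`, equivalently `‖A‖ ≥ 1`. -/
theorem stmt_8 {H : Type*} [NormedAddCommGroup H] [InnerProductSpace ℂ H] [CompleteSpace H]
    (hdim : ¬ FiniteDimensional ℂ H)
    (A : H →L[ℂ] H) (hA : adjoint A ∘L A = A ∘L adjoint A)
    (G : Set H) (hGfin : G.Finite)
    (hlower : ∃ α : ℝ, 0 < α ∧ ∀ f : H,
      ENNReal.ofReal (α * ‖f‖ ^ 2) ≤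
        ∑' p : ↥G × ℕ, (‖⟪f, (A ^ p.2) (p.1 : H)⟫_ℂ‖₊ : ℝ≥0∞) ^ 2) :
    (∀ r : ℝ, 0 < r → r < 1 → ¬ spectrum ℂ A ⊆ Metric.closedBall (0 : ℂ) r) ∧ 1 ≤ ‖A‖ := by
  haveI : Nontrivial H := by
    by_contra h
    rw [not_nontrivial_iff_subsingleton] at h
    exact hdim inferInstance
  haveI : Fintype ↥G := hGfin.fintype
  haveI : IsStarNormal A := by
    constructor
    show star A * A = A * star A
    rw [ContinuousLinearMap.star_eq_adjoint]
    exact hA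
  have key : ∀ r : ℝ, 0 < r → r < 1 → ¬ spectrum ℂ A ⊆ Metric.closedBall (0 : ℂ) r := by
    intro r hr0 hr1 hsub
    obtain ⟨α, hα, hlow⟩ := hlower
    set ρ : ℝ≥0 := r.toNNReal with hρdef
    have hρ1 : ρ < 1 := by
      rw [hρdef, ← Real.toNNReal_one]
      exact (Real.toNNReal_lt_toNNReal_iff one_pos).mpr hr1
    -- the norm of A is at most r
    have hAρ : ‖A‖₊ ≤ ρ := by
      have h1 : spectralRadius ℂ A ≤ (ρ : ℝ≥0∞) := by
        rw [spectralRadius]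
        refine iSup₂_le fun k hk => ?_
        have hk' : ‖k‖ ≤ r := by
          simpa [dist_zero_right] using hsub hk
        rw [ENNReal.coe_le_coe]
        rw [← Real.toNNReal_coe (r := ‖k‖₊), hρdef]
        exact Real.toNNReal_mono (by simpa using hk')
      rw [IsStarNormal.spectralRadius_eq_nnnorm A] at h1
      exact_mod_cast h1
    have hρ1' : (ρ : ℝ≥0) ≤ 1 := hρ1.le
    -- total of the squared norms of the generators
    set K : ℝ≥0 := ∑ g : ↥G, ‖(g : H)‖₊ ^ 2 with hK
    set c : ℝ≥0 := (1 - ρ)⁻¹ * K with hc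
    -- choose N with ρ^N * c < α
    obtain ⟨N, hN⟩ := NNReal.exists_pow_lt_of_lt_one
      (a := α.toNNReal / (c + 1))
      (div_pos (Real.toNNReal_pos.mpr hα) (by positivity)) hρ1
    have hNc : ρ ^ N * c < α.toNNReal := by
      calc ρ ^ N * c ≤ ρ ^ N * (c + 1) := by
            exact mul_le_mul_right (le_add_of_nonneg_right zero_le_one) _
        _ < α.toNNReal / (c + 1) * (c + 1) := by
            exact mul_lt_mul_of_pos_right hN (by positivity)
        _ = α.toNNReal := div_mul_cancel₀ _ (by positivity)
    -- the finite-dimensional subspace spanned by A^n g, n < N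
    set S : Set H := (fun p : ℕ × H => (A ^ p.1) p.2) '' ((Set.Iio N) ×ˢ G) with hS
    have hSfin : S.Finite := (Set.Finite.prod (Set.finite_Iio N) hGfin).image _
    set V : Submodule ℂ H := Submodule.span ℂ S with hV
    haveI : FiniteDimensional ℂ V := FiniteDimensional.span_of_finite ℂ hSfin
    have hVne : V ≠ ⊤ := by
      intro hVtop
      haveI : FiniteDimensional ℂ (⊤ : Submodule ℂ H) := hVtop ▸ ‹FiniteDimensional ℂ V›
      exact hdim (Submodule.topEquiv (R := ℂ) (M := H)).finiteDimensional
    have hVorth : Vᗮ ≠ ⊥ := fun h => hVne (Submodule.orthogonal_eq_bot_iff.mp h)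
    obtain ⟨f0, hf0V, hf0⟩ := Submodule.exists_mem_ne_zero_of_ne_bot hVorth
    set f : H := (‖f0‖ : ℝ)⁻¹ • f0 with hf
    have hfV : f ∈ Vᗮ := Submodule.smul_mem _ _ hf0V
    have hfnorm : ‖f‖ = 1 := by
      rw [hf, norm_smul, norm_inv, norm_norm]
      field_simp [norm_ne_zero_iff.mpr hf0]
    -- orthogonality for n < N
    have horth : ∀ (g : ↥G) (n : ℕ), n < N → ⟪f, (A ^ n) (g : H)⟫_ℂ = 0 := by
      intro g n hn
      have hmem : (A ^ n) (g : H) ∈ V :=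
        Submodule.subset_span ⟨(n, (g : H)), ⟨Set.mem_Iio.mpr hn, g.2⟩, rfl⟩
      exact inner_eq_zero_symm.mpr (hfV _ hmem)
    -- termwise bound
    have hterm : ∀ p : ↥G × ℕ,
        (‖⟪f, (A ^ p.2) (p.1 : H)⟫_ℂ‖₊ : ℝ≥0∞) ^ 2
          ≤ (ρ : ℝ≥0∞) ^ N * ((‖(p.1 : H)‖₊ : ℝ≥0∞) ^ 2 * (ρ : ℝ≥0∞) ^ p.2) := by
      rintro ⟨g, n⟩
      by_cases hn : n < N
      · show (‖⟪f, (A ^ n) (g : H)⟫_ℂ‖₊ : ℝ≥0∞) ^ 2 ≤ _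
        rw [horth g n hn]
        simp
      · push_neg at hn
        have h1 : ‖⟪f, (A ^ n) (g : H)⟫_ℂ‖₊ ≤ ρ ^ n * ‖(g : H)‖₊ := by
          calc ‖⟪f, (A ^ n) (g : H)⟫_ℂ‖₊ ≤ ‖f‖₊ * ‖(A ^ n) (g : H)‖₊ :=
                nnnorm_inner_le_nnnorm _ _
            _ = ‖(A ^ n) (g : H)‖₊ := by
                have : ‖f‖₊ = 1 := by ext; simpa using hfnorm
                rw [this, one_mul]
            _ ≤ ‖A ^ n‖₊ * ‖(g : H)‖₊ := (A ^ n).le_opNNNorm _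
            _ ≤ ‖A‖₊ ^ n * ‖(g : H)‖₊ := mul_le_mul_left (nnnorm_pow_le A n) _
            _ ≤ ρ ^ n * ‖(g : H)‖₊ := mul_le_mul_left (pow_le_pow_left' hAρ n) _
        have h2 : (ρ : ℝ≥0) ^ n * ‖(g : H)‖₊ * (ρ ^ n * ‖(g : H)‖₊)
            ≤ ρ ^ N * (‖(g : H)‖₊ ^ 2 * ρ ^ n) := by
          have hρn : (ρ : ℝ≥0) ^ n ≤ ρ ^ N := pow_le_pow_right_of_le_one' hρ1' hn
          calc ρ ^ n * ‖(g : H)‖₊ * (ρ ^ n * ‖(g : H)‖₊)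
              = ρ ^ n * (‖(g : H)‖₊ ^ 2 * ρ ^ n) := by ring
            _ ≤ ρ ^ N * (‖(g : H)‖₊ ^ 2 * ρ ^ n) := mul_le_mul_left hρn _
        calc (‖⟪f, (A ^ n) (g : H)⟫_ℂ‖₊ : ℝ≥0∞) ^ 2
            ≤ ((ρ ^ n * ‖(g : H)‖₊ : ℝ≥0) : ℝ≥0∞) ^ 2 := by
              exact_mod_cast pow_le_pow_left' h1 2
          _ = (((ρ ^ n * ‖(g : H)‖₊) * (ρ ^ n * ‖(g : H)‖₊) : ℝ≥0) : ℝ≥0∞) := by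
              rw [sq]; push_cast; ring
          _ ≤ ((ρ ^ N * (‖(g : H)‖₊ ^ 2 * ρ ^ n) : ℝ≥0) : ℝ≥0∞) := by
              exact_mod_cast h2
          _ = (ρ : ℝ≥0∞) ^ N * ((‖(g : H)‖₊ : ℝ≥0∞) ^ 2 * (ρ : ℝ≥0∞) ^ n) := by
              push_cast; ring
    -- sum the bound
    have hsum : (∑' p : ↥G × ℕ, (‖⟪f, (A ^ p.2) (p.1 : H)⟫_ℂ‖₊ : ℝ≥0∞) ^ 2)
        ≤ ((ρ ^ N * c : ℝ≥0) : ℝ≥0∞) := by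
      calc (∑' p : ↥G × ℕ, (‖⟪f, (A ^ p.2) (p.1 : H)⟫_ℂ‖₊ : ℝ≥0∞) ^ 2)
          ≤ ∑' p : ↥G × ℕ,
              (ρ : ℝ≥0∞) ^ N * ((‖(p.1 : H)‖₊ : ℝ≥0∞) ^ 2 * (ρ : ℝ≥0∞) ^ p.2) :=
            ENNReal.tsum_le_tsum hterm
        _ = (ρ : ℝ≥0∞) ^ N * ∑' p : ↥G × ℕ,
              ((‖(p.1 : H)‖₊ : ℝ≥0∞) ^ 2 * (ρ : ℝ≥0∞) ^ p.2) := ENNReal.tsum_mul_left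
        _ = (ρ : ℝ≥0∞) ^ N * ∑' g : ↥G, ∑' n : ℕ,
              ((‖(g : H)‖₊ : ℝ≥0∞) ^ 2 * (ρ : ℝ≥0∞) ^ n) := by
            rw [ENNReal.tsum_prod']
        _ = (ρ : ℝ≥0∞) ^ N * ∑' g : ↥G,
              ((‖(g : H)‖₊ : ℝ≥0∞) ^ 2 * (1 - (ρ : ℝ≥0∞))⁻¹) := by
            congr 1
            refine tsum_congr fun g => ?_
            rw [ENNReal.tsum_mul_left, ENNReal.tsum_geometric]
        _ = ((ρ ^ N * c : ℝ≥0) : ℝ≥0∞) := by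
            rw [tsum_fintype]
            have h1ρ : (1 : ℝ≥0) - ρ ≠ 0 := by
              simp only [ne_eq, tsub_eq_zero_iff_le, not_le]
              exact hρ1
            rw [hc, hK, ENNReal.coe_mul, ENNReal.coe_mul, ENNReal.coe_pow,
              ENNReal.coe_inv h1ρ, ENNReal.coe_sub, ENNReal.coe_one,
              ENNReal.coe_finset_sum]
            rw [← Finset.sum_mul]
            push_cast
            ring
    -- contradiction with the lower frame bound
    have hlowf := hlow f
    rw [hfnorm] at hlowf
    have : ENNReal.ofReal α ≤ ((ρ ^ N * c : ℝ≥0) : ℝ≥0∞) := by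
      simpa using hlowf.trans hsum
    rw [ENNReal.ofReal, ENNReal.coe_le_coe] at this
    exact absurd this (not_le.mpr hNc)
  refine ⟨key, ?_⟩
  by_contra h
  push_neg at h
  have h2 : spectrum ℂ A ⊆ Metric.closedBall (0 : ℂ) (max ‖A‖ (1 / 2)) :=
    (spectrum.subset_closedBall_norm A).trans
      (Metric.closedBall_subset_closedBall (le_max_left _ _))
  exact key (max ‖A‖ (1 / 2)) (lt_max_of_lt_right (by norm_num))
    (max_lt h (by norm_num)) h2
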